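/- Let p, p', v ∈ ℝ^m with p ≠ p' and p' ≠ v. If v is a pivot relative to p at p', i.e., d(p', v) ≥ d(p, v), and p'' is the point of the closed segment [p', v] closest to p, then d(p, p'') < d(p, p') (each pivot step strictly decreases the distance to p). -/

import Mathlib

/-- A pivot step strictly decreases the distance to `p`: if `d(p', v) ≥ d(p, v)`
and `p''` is the point of `[p', v]` closest to `p`, then `d(p, p'') < d(p, p')`. -/
theorem pivot_step_decreases {m : ℕ} (p p' v p'' : EuclideanSpace ℝ (Fin m))
    (hpp' : p ≠ p') (hp'v : p' ≠ v) (hpivot : dist p v ≤ dist p' v)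
    (hmem : p'' ∈ segment ℝ p' v)
    (hmin : ∀ x ∈ segment ℝ p' v, dist p p'' ≤ dist p x) :
    dist p p'' < dist p p' := by
  set a : EuclideanSpace ℝ (Fin m) := p - p' with ha
  set b : EuclideanSpace ℝ (Fin m) := v - p' with hb
  have hane : a ≠ 0 := sub_ne_zero.mpr hpp'
  have hbne : b ≠ 0 := sub_ne_zero.mpr (Ne.symm hp'v)
  have hna : (0:ℝ) < ‖a‖ := norm_pos_iff.mpr hane
  have hnb : (0:ℝ) < ‖b‖ := norm_pos_iff.mpr hbne
  set c : ℝ := inner ℝ a b with hc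
  -- from the pivot condition, ‖a‖² ≤ 2c
  have hab : a - b = p - v := by simp [ha, hb]
  have key : ‖a‖^2 ≤ 2 * c := by
    have h1 : ‖p - v‖ ≤ ‖p' - v‖ := by
      rw [← dist_eq_norm, ← dist_eq_norm]; exact hpivot
    have h2 : ‖a - b‖^2 ≤ ‖b‖^2 := by
      rw [hab]
      have hb' : ‖b‖ = ‖p' - v‖ := by rw [hb, norm_sub_rev]
      rw [hb']
      exact pow_le_pow_left₀ (norm_nonneg _) h1 2
    have h3 : ‖a - b‖^2 = ‖a‖^2 - 2*c + ‖b‖^2 := by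
      rw [@norm_sub_sq_real, hc]
    nlinarith
  have hcpos : 0 < c := by nlinarith
  set t : ℝ := min 1 (c / ‖b‖^2) with ht
  have ht0 : 0 < t := lt_min one_pos (div_pos hcpos (by positivity))
  have ht1 : t ≤ 1 := min_le_left _ _
  have htb : t * ‖b‖^2 ≤ c := by
    have := min_le_right 1 (c / ‖b‖^2)
    calc t * ‖b‖^2 ≤ (c / ‖b‖^2) * ‖b‖^2 := by
          apply mul_le_mul_of_nonneg_right this (by positivity)
      _ = c := by field_simp
  set x : EuclideanSpace ℝ (Fin m) := p' + t • b with hx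
  have hxmem : x ∈ segment ℝ p' v := by
    rw [segment_eq_image']
    exact ⟨t, ⟨ht0.le, ht1⟩, rfl⟩
  have hxd : dist p x < dist p p' := by
    have hpx : p - x = a - t • b := by simp [hx, ha]; abel
    have hsq : ‖p - x‖^2 = ‖a‖^2 - 2*t*c + t^2*‖b‖^2 := by
      rw [hpx, @norm_sub_sq_real, real_inner_smul_right, norm_smul]
      rw [hc]
      rw [Real.norm_eq_abs, abs_of_pos ht0]
      ring
    have hlt : ‖p - x‖^2 < ‖a‖^2 := by nlinarith
    have : dist p x ^ 2 < dist p p' ^ 2 := by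
      rw [dist_eq_norm, dist_eq_norm, ← ha]; exact hlt
    exact lt_of_pow_lt_pow_left₀ 2 dist_nonneg this
  exact lt_of_le_of_lt (hmin x hxmem) hxd
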